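/- The polynomial F_{k+1}(x,-1) - F_k(x,-1), where F_n is the Fibonacci polynomial sequence with F_0 = 0, F_1 = 1, F_n = x F_{n-1} - F_{n-2}, equals the product over j from 0 to k-1 of (x - 2 cos((2j+1)*pi/(2k+1))). -/

import Mathlib

open Real

/-- Bivariate Fibonacci polynomial sequence: `F_0 = 0`, `F_1 = 1`,
`F_n = x F_{n-1} + s F_{n-2}`. -/
def fibP (x s : ℝ) : ℕ → ℝ
  | 0 => 0
  | 1 => 1
  | n + 2 => x * fibP x s (n + 1) + s * fibP x s n

/-- Bivariate Lucas polynomial sequence: `L_0 = 2`, `L_1 = x`,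
`L_n = x L_{n-1} + s L_{n-2}`. -/
def lucasP (x s : ℝ) : ℕ → ℝ
  | 0 => 2
  | 1 => x
  | n + 2 => x * lucasP x s (n + 1) + s * lucasP x s n

open Polynomial in
/-- The polynomial `F_{n+1}(X,-1) - F_n(X,-1)`. -/
noncomputable def QP : ℕ → Polynomial ℝ
  | 0 => 1
  | 1 => X - 1
  | n + 2 => X * QP (n + 1) - QP n

open Polynomial

lemma QP_eval (x : ℝ) : ∀ n, (QP n).eval x = fibP x (-1) (n + 1) - fibP x (-1) n
  | 0 => by simp [QP, fibP]
  | 1 => by simp [QP, fibP]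
  | n + 2 => by
      have h1 := QP_eval x (n + 1)
      have h2 := QP_eval x n
      simp only [QP, eval_sub, eval_mul, eval_X, h1, h2]
      show _ = fibP x (-1) (n + 3) - fibP x (-1) (n + 2)
      rw [show fibP x (-1) (n + 3) = x * fibP x (-1) (n + 2) + (-1) * fibP x (-1) (n+1) from rfl,
        show fibP x (-1) (n + 2) = x * fibP x (-1) (n + 1) + (-1) * fibP x (-1) n from rfl]
      ring

lemma QP_monic_deg : ∀ n, (QP n).Monic ∧ (QP n).natDegree = n
  | 0 => by simp [QP, monic_one]
  | 1 => by
      constructor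
      · simpa [QP] using (monic_X_sub_C (1:ℝ))
      · simpa [QP] using natDegree_X_sub_C (1:ℝ)
  | n + 2 => by
      obtain ⟨h1m, h1d⟩ := QP_monic_deg (n + 1)
      obtain ⟨h2m, h2d⟩ := QP_monic_deg n
      have hm : (X * QP (n + 1)).Monic := (monic_X).mul h1m
      have hd : (X * QP (n + 1)).natDegree = n + 2 := by
        rw [natDegree_mul X_ne_zero h1m.ne_zero, natDegree_X, h1d]; omega
      have hlt : (QP n).degree < (X * QP (n + 1)).degree := by
        rw [degree_eq_natDegree h2m.ne_zero, degree_eq_natDegree hm.ne_zero, h2d, hd]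
        exact_mod_cast by omega
      constructor
      · exact hm.sub_of_left hlt
      · show (X * QP (n + 1) - QP n).natDegree = n + 2
        rw [← hd]
        apply natDegree_sub_eq_left_of_natDegree_lt
        rw [h2d, hd]; omega

lemma QP_trig (θ : ℝ) : ∀ n, Real.cos (θ / 2) * (QP n).eval (2 * Real.cos θ)
    = Real.cos ((2 * n + 1) * θ / 2)
  | 0 => by norm_num [QP]
  | 1 => by
      have h := Real.cos_add θ (θ / 2)
      have h' := Real.cos_sub θ (θ / 2)
      simp only [QP, eval_sub, eval_mul, eval_X, eval_one]
      push_cast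
      rw [show (2 * (1:ℝ) + 1) * θ / 2 = θ + θ / 2 by ring]
      rw [show θ - θ / 2 = θ / 2 by ring] at h'
      linear_combination -h - h'
  | n + 2 => by
      have h1 := QP_trig θ (n + 1)
      have h2 := QP_trig θ n
      have ha := Real.cos_add θ ((2 * (n + 1 : ℝ) + 1) * θ / 2)
      have hb := Real.cos_sub θ ((2 * (n + 1 : ℝ) + 1) * θ / 2)
      simp only [QP, eval_sub, eval_mul, eval_X]
      push_cast at h1 h2 ⊢
      rw [show (2 * ((n:ℝ) + 2) + 1) * θ / 2 = θ + (2 * ((n:ℝ) + 1) + 1) * θ / 2 by ring]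
      rw [show θ - (2 * ((n:ℝ) + 1) + 1) * θ / 2 = -((2 * (n:ℝ) + 1) * θ / 2) by ring,
        Real.cos_neg] at hb
      linear_combination (2 * Real.cos θ) * h1 - h2 - ha - hb

/-- `F_{k+1}(x,-1) - F_k(x,-1) = ∏_{j=0}^{k-1} (x - 2 cos((2j+1)π/(2k+1)))`. -/
theorem fibP_sub_fibP_factorization (k : ℕ) (x : ℝ) :
    fibP x (-1) (k + 1) - fibP x (-1) k =
      ∏ j ∈ Finset.range k,
        (x - 2 * Real.cos ((2 * j + 1) * Real.pi / (2 * k + 1))) := by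
  classical
  set r : ℕ → ℝ := fun j => 2 * Real.cos ((2 * j + 1) * Real.pi / (2 * k + 1)) with hr
  obtain ⟨hmon, hdeg⟩ := QP_monic_deg k
  have hK : (0:ℝ) < 2 * k + 1 := by positivity
  have hθmem : ∀ j < k, (2 * (j:ℝ) + 1) * Real.pi / (2 * k + 1) ∈ Set.Ioo 0 Real.pi := by
    intro j hj
    constructor
    · positivity
    · rw [div_lt_iff₀ hK]
      have : (2 * (j:ℝ) + 1) < 2 * k + 1 := by
        have : (j:ℝ) < k := by exact_mod_cast hj
        linarith
      nlinarith [Real.pi_pos]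
  -- each r j is a root of QP k
  have hroot : ∀ j < k, (QP k).eval (r j) = 0 := by
    intro j hj
    set θ := (2 * (j:ℝ) + 1) * Real.pi / (2 * k + 1) with hθ
    have htrig := QP_trig θ k
    have hz : Real.cos ((2 * k + 1) * θ / 2) = 0 := by
      rw [Real.cos_eq_zero_iff]
      refine ⟨j, ?_⟩
      rw [hθ]
      field_simp
      simp
    have hpos : 0 < Real.cos (θ / 2) := by
      apply Real.cos_pos_of_mem_Ioo
      obtain ⟨h0, h1⟩ := hθmem j hj
      constructor <;> nlinarith [Real.pi_pos]
    rw [hz] at htrig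
    rcases mul_eq_zero.mp htrig with h | h
    · exact absurd h hpos.ne'
    · simpa [hr, ← hθ] using h
  -- the r j are pairwise distinct for j < k
  have hinj : ∀ i < k, ∀ j < k, r i = r j → i = j := by
    intro i hi j hj hij
    have hci : Real.cos ((2 * (i:ℝ) + 1) * Real.pi / (2 * k + 1))
        = Real.cos ((2 * (j:ℝ) + 1) * Real.pi / (2 * k + 1)) := by
      simp only [hr] at hij; linarith
    have h1 := hθmem i hi
    have h2 := hθmem j hj
    have := Real.injOn_cos ⟨le_of_lt h1.1, le_of_lt h1.2⟩ ⟨le_of_lt h2.1, le_of_lt h2.2⟩ hci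
    field_simp at this
    have h : (i:ℝ) = j := by linarith
    exact_mod_cast h
  -- the multiset of roots
  have hne : QP k ≠ 0 := hmon.ne_zero
  have hs : ((Finset.range k).val.map r) ≤ (QP k).roots := by
    rw [Multiset.le_iff_subset]
    · intro a ha
      simp only [Multiset.mem_map, Finset.mem_val, Finset.mem_range] at ha
      obtain ⟨j, hj, rfl⟩ := ha
      rw [Polynomial.mem_roots hne]
      exact hroot j hj
    · refine Multiset.Nodup.map_on ?_ (Finset.range k).nodup
      intro i hi j hj
      rw [Finset.mem_val, Finset.mem_range] at hi hj
      exact hinj i hi j hj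
  have hdvd : (∏ j ∈ Finset.range k, (X - C (r j))) ∣ QP k := by
    have := (Multiset.prod_X_sub_C_dvd_iff_le_roots hne ((Finset.range k).val.map r)).mpr hs
    simpa [Multiset.map_map, Finset.prod_eq_multiset_prod, Function.comp] using this
  have hpm : (∏ j ∈ Finset.range k, (X - C (r j))).Monic :=
    monic_prod_of_monic _ _ fun j _ => monic_X_sub_C _
  have hpd : (∏ j ∈ Finset.range k, (X - C (r j))).natDegree = k := by
    rw [natDegree_prod _ _ fun j _ => X_sub_C_ne_zero (r j)]
    simp [natDegree_X_sub_C]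
  have heq : (∏ j ∈ Finset.range k, (X - C (r j))) = QP k := by
    apply eq_of_dvd_of_natDegree_le_of_leadingCoeff hdvd
    · rw [hdeg, hpd]
    · rw [hpm.leadingCoeff, hmon.leadingCoeff]
  have := congrArg (Polynomial.eval x) heq
  rw [QP_eval x k] at this
  rw [← this]
  simp [eval_prod]
  rfl
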